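/- Let n ≥ 2 and 0 < ε < 1/(3600 n¹¹). Suppose 𝒢 is a group of n×n complex unitary matrices and ξ ∈ ℂⁿ is a unit vector with |⟨Gξ, ξ⟩| ≥ 1 − ε for all G ∈ 𝒢. Then there exists a common eigenvector η of 𝒢 (a nonzero vector such that for each G ∈ 𝒢 there is a scalar λ_G with Gη = λ_G η) satisfying ‖ξ − η‖² < 3600 n¹¹ ε. -/

import Mathlib

open scoped ComplexConjugate Matrix

namespace Stmt19

variable {n : ℕ}

lemma toEL_apply (M : Matrix (Fin n) (Fin n) ℂ) (v : EuclideanSpace ℂ (Fin n)) (i : Fin n) :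
    Matrix.toEuclideanLin M v i = ∑ j, M i j * v j := by
  simp [Matrix.toEuclideanLin_apply, Matrix.mulVec, dotProduct]

lemma inner_toEL (M : Matrix (Fin n) (Fin n) ℂ) (w v : EuclideanSpace ℂ (Fin n)) :
    (inner ℂ w (Matrix.toEuclideanLin M v) : ℂ) = ∑ i, ∑ j, conj (w i) * (M i j * v j) := by
  simp only [PiLp.inner_apply, RCLike.inner_apply', toEL_apply, Finset.mul_sum]

lemma toEL_mul (M N : Matrix (Fin n) (Fin n) ℂ) (v : EuclideanSpace ℂ (Fin n)) :
    Matrix.toEuclideanLin (M * N) v = Matrix.toEuclideanLin M (Matrix.toEuclideanLin N v) := by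
  apply PiLp.ext; intro i
  simp only [toEL_apply, Matrix.mul_apply, Finset.sum_mul]
  rw [Finset.sum_comm]; simp only [Finset.mul_sum, mul_assoc]

lemma inner_toEL_conjTranspose (M : Matrix (Fin n) (Fin n) ℂ)
    (x y : EuclideanSpace ℂ (Fin n)) :
    (inner ℂ (Matrix.toEuclideanLin Mᴴ y) x : ℂ) = inner ℂ y (Matrix.toEuclideanLin M x) := by
  rw [Matrix.toEuclideanLin_conjTranspose_eq_adjoint]
  exact LinearMap.adjoint_inner_left _ x y

/-- Matrices as a Euclidean space (Frobenius). -/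
noncomputable def matE (n : ℕ) :
    Matrix (Fin n) (Fin n) ℂ ≃ₗ[ℝ] EuclideanSpace ℂ (Fin n × Fin n) where
  toFun M := (WithLp.equiv 2 _).symm fun p => M p.1 p.2
  invFun x := Matrix.of fun i j => x (i, j)
  map_add' _ _ := rfl
  map_smul' _ _ := rfl
  left_inv _ := rfl
  right_inv _ := rfl

lemma matE_apply (M : Matrix (Fin n) (Fin n) ℂ) (p : Fin n × Fin n) :
    matE n M p = M p.1 p.2 := rfl

lemma matE_norm_sq (M : Matrix (Fin n) (Fin n) ℂ) :
    ‖matE n M‖ ^ 2 = (Matrix.trace (Mᴴ * M)).re := by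
  rw [EuclideanSpace.norm_eq, Real.sq_sqrt (by positivity)]
  simp only [Matrix.trace, Matrix.diag, Matrix.mul_apply, Matrix.conjTranspose_apply]
  rw [Complex.re_sum]
  rw [show (∑ x : Fin n × Fin n, ‖(matE n) M x‖ ^ 2) = ∑ i : Fin n, ∑ j : Fin n, ‖M j i‖^2 from by
    rw [← Finset.sum_product']
    exact Finset.sum_nbij' (fun p => (p.2, p.1)) (fun p => (p.2, p.1)) (by simp) (by simp)
      (by simp) (by simp) (fun p _ => by rfl)]
  apply Finset.sum_congr rfl
  intro i _
  rw [Complex.re_sum]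
  apply Finset.sum_congr rfl
  intro j _
  rw [show star (M j i) * M j i = ((Complex.normSq (M j i) : ℂ)) from by
    rw [Complex.normSq_eq_conj_mul_self]; rfl]
  rw [Complex.ofReal_re, Complex.normSq_eq_norm_sq]

/-- The rank one projection onto `ξ` as a matrix. -/
noncomputable def proj (ξ : EuclideanSpace ℂ (Fin n)) : Matrix (Fin n) (Fin n) ℂ :=
  Matrix.of fun i j => ξ i * conj (ξ j)

lemma toEL_proj (ξ v : EuclideanSpace ℂ (Fin n)) :
    Matrix.toEuclideanLin (proj ξ) v = (inner ℂ ξ v : ℂ) • ξ := by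
  apply PiLp.ext; intro i
  simp only [toEL_apply, proj, Matrix.of_apply, PiLp.smul_apply, PiLp.inner_apply,
    RCLike.inner_apply', smul_eq_mul, Finset.sum_mul, Finset.mul_sum]
  apply Finset.sum_congr rfl; intro j _; ring

lemma projH (ξ : EuclideanSpace ℂ (Fin n)) : (proj ξ)ᴴ = proj ξ := by
  ext i j
  simp [proj, Matrix.conjTranspose_apply, mul_comm]

lemma inner_self_one {ξ : EuclideanSpace ℂ (Fin n)} (hξ : ‖ξ‖ = 1) :
    ∑ k, conj (ξ k) * ξ k = (1 : ℂ) := by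
  have h : (inner ℂ ξ ξ : ℂ) = (1 : ℂ) := by
    rw [inner_self_eq_norm_sq_to_K, hξ]; norm_num
  rw [← h, PiLp.inner_apply]
  simp only [RCLike.inner_apply']

lemma proj_sq {ξ : EuclideanSpace ℂ (Fin n)} (hξ : ‖ξ‖ = 1) : proj ξ * proj ξ = proj ξ := by
  ext i j
  simp only [Matrix.mul_apply, proj, Matrix.of_apply]
  calc ∑ k, ξ i * conj (ξ k) * (ξ k * conj (ξ j))
      = (ξ i * conj (ξ j)) * ∑ k, conj (ξ k) * ξ k := by
        rw [Finset.mul_sum]; apply Finset.sum_congr rfl; intro k _; ring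
    _ = ξ i * conj (ξ j) := by rw [inner_self_one hξ, mul_one]

lemma proj_trace {ξ : EuclideanSpace ℂ (Fin n)} (hξ : ‖ξ‖ = 1) :
    Matrix.trace (proj ξ) = 1 := by
  rw [Matrix.trace]
  simp only [Matrix.diag, proj, Matrix.of_apply]
  rw [← inner_self_one hξ]
  apply Finset.sum_congr rfl; intro k _; ring

lemma inner_SA (ξ v : EuclideanSpace ℂ (Fin n)) (A : Matrix (Fin n) (Fin n) ℂ) :
    (inner ℂ v (Matrix.toEuclideanLin (A * proj ξ * Aᴴ) v) : ℂ)
      = (inner ℂ ξ (Matrix.toEuclideanLin Aᴴ v) : ℂ)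
        * conj (inner ℂ ξ (Matrix.toEuclideanLin Aᴴ v) : ℂ) := by
  rw [toEL_mul, toEL_mul, toEL_proj, map_smul, inner_smul_right]
  congr 1
  rw [← inner_toEL_conjTranspose, inner_conj_symm]

/-- The quadratic form `x ↦ ⟨v, x v⟩` on matrix-vectors. -/
noncomputable def qf (v : EuclideanSpace ℂ (Fin n)) (x : EuclideanSpace ℂ (Fin n × Fin n)) : ℂ :=
  ∑ i, ∑ j, conj (v i) * (x (i, j) * v j)

lemma qf_matE (v : EuclideanSpace ℂ (Fin n)) (M : Matrix (Fin n) (Fin n) ℂ) :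
    qf v (matE n M) = inner ℂ v (Matrix.toEuclideanLin M v) := by
  rw [inner_toEL]; rfl

lemma qf_add (v : EuclideanSpace ℂ (Fin n)) (x y : EuclideanSpace ℂ (Fin n × Fin n)) :
    qf v (x + y) = qf v x + qf v y := by
  simp only [qf, PiLp.add_apply, mul_add, add_mul, Finset.sum_add_distrib]

lemma qf_smul (v : EuclideanSpace ℂ (Fin n)) (α : ℝ) (x : EuclideanSpace ℂ (Fin n × Fin n)) :
    qf v (α • x) = (α : ℂ) * qf v x := by
  simp only [qf, PiLp.smul_apply, Complex.real_smul, Finset.mul_sum]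
  apply Finset.sum_congr rfl; intro i _
  apply Finset.sum_congr rfl; intro j _
  ring

lemma qf_continuous (v : EuclideanSpace ℂ (Fin n)) : Continuous (qf v) := by
  apply continuous_finset_sum; intro i _
  apply continuous_finset_sum; intro j _
  exact continuous_const.mul
    (((EuclideanSpace.proj ((i, j) : Fin n × Fin n)).continuous).mul continuous_const)

lemma coord_continuous (p : Fin n × Fin n) :
    Continuous (fun x : EuclideanSpace ℂ (Fin n × Fin n) => x p) :=
  (EuclideanSpace.proj p).continuous

end Stmt19

open Stmt19


set_option maxHeartbeats 1000000 in
/-- Let `n ≥ 2` and `0 < ε < 1/(3600 n¹¹)`. Every group of `n × n`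
unitary matrices with a weak `ε`-approximate fixed point `ξ` has a common eigenvector `η`
with `‖ξ - η‖² < 3600 n¹¹ ε`. -/
theorem stmt_19 (n : ℕ) (hn : 2 ≤ n) (ε : ℝ) (hε : 0 < ε)
    (hε1 : ε < 1 / (3600 * (n : ℝ) ^ 11))
    (G : Set (Matrix (Fin n) (Fin n) ℂ))
    (hone : (1 : Matrix (Fin n) (Fin n) ℂ) ∈ G)
    (hmul : ∀ A ∈ G, ∀ B ∈ G, A * B ∈ G)
    (hinv : ∀ A ∈ G, A⁻¹ ∈ G)
    (hunitary : ∀ A ∈ G, A ∈ Matrix.unitaryGroup (Fin n) ℂ)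
    (ξ : EuclideanSpace ℂ (Fin n)) (hξ : ‖ξ‖ = 1)
    (hweak : ∀ A ∈ G, 1 - ε ≤ ‖(inner ℂ ξ (Matrix.toEuclideanLin A ξ) : ℂ)‖) :
    ∃ η : EuclideanSpace ℂ (Fin n), η ≠ 0 ∧
      (∀ A ∈ G, ∃ lam : ℂ, Matrix.toEuclideanLin A η = lam • η) ∧
      ‖ξ - η‖ ^ 2 < 3600 * (n : ℝ) ^ 11 * ε := by
  classical
  have hn1 : (1 : ℝ) ≤ (n : ℝ) ^ 11 := by
    have : (1:ℝ) ≤ (n:ℝ) := by exact_mod_cast Nat.one_le_of_lt hn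
    exact one_le_pow₀ this
  have h0 : (0:ℝ) < 3600 * (n : ℝ) ^ 11 := by positivity
  rw [lt_div_iff₀ h0] at hε1
  have hε36 : ε < 1 / 3600 := by
    rw [lt_div_iff₀ (by norm_num : (0:ℝ) < 3600)]
    nlinarith [hε.le]
  have hε2 : (0:ℝ) ≤ 1 - ε := by nlinarith
  set a : ℝ := (1 - ε) ^ 2 with ha
  have ha12 : 1 / 2 < a := by rw [ha]; nlinarith
  set P : Matrix (Fin n) (Fin n) ℂ := Stmt19.proj ξ with hP
  set SE : Set (EuclideanSpace ℂ (Fin n × Fin n)) :=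
    (fun A => Stmt19.matE n (A * P * Aᴴ)) '' G with hSEdef
  set K := closure (convexHull ℝ SE) with hKdef
  set C : Set (EuclideanSpace ℂ (Fin n × Fin n)) :=
    {x | (∀ p : Fin n × Fin n, x (p.2, p.1) = conj (x p)) ∧ (∑ i, x (i, i)) = 1 ∧
      (∀ v : EuclideanSpace ℂ (Fin n), 0 ≤ (Stmt19.qf v x).re) ∧
      a ≤ (Stmt19.qf ξ x).re} with hCdef
  -- unitarity facts
  have hAu : ∀ A ∈ G, Aᴴ * A = 1 := by
    intro A hA
    have := Matrix.mem_unitaryGroup_iff'.mp (hunitary A hA)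
    rwa [Matrix.star_eq_conjTranspose] at this
  have hAu' : ∀ A ∈ G, A * Aᴴ = 1 := by
    intro A hA
    have := Matrix.mem_unitaryGroup_iff.mp (hunitary A hA)
    rwa [Matrix.star_eq_conjTranspose] at this
  have hPH : Pᴴ = P := by rw [hP]; exact projH ξ
  have hPP : P * P = P := by rw [hP]; exact proj_sq hξ
  have hSH : ∀ A : Matrix (Fin n) (Fin n) ℂ, (A * P * Aᴴ)ᴴ = A * P * Aᴴ := by
    intro A
    rw [Matrix.conjTranspose_mul, Matrix.conjTranspose_mul, Matrix.conjTranspose_conjTranspose,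
      hPH, Matrix.mul_assoc]
  -- each sample point lies in C
  have hSC : SE ⊆ C := by
    rintro - ⟨A, hA, rfl⟩
    refine ⟨?_, ?_, ?_, ?_⟩
    · intro p
      show (A * P * Aᴴ) p.2 p.1 = conj ((A * P * Aᴴ) p.1 p.2)
      conv_lhs => rw [← hSH A]
      rw [Matrix.conjTranspose_apply]
      rfl
    · show (∑ i, (A * P * Aᴴ) i i) = 1
      have : Matrix.trace (A * P * Aᴴ) = 1 := by
        rw [Matrix.trace_mul_cycle, hAu A hA, one_mul, hP, proj_trace hξ]
      simpa [Matrix.trace, Matrix.diag] using this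
    · intro v
      rw [qf_matE, hP, inner_SA, Complex.mul_conj, Complex.ofReal_re]
      exact Complex.normSq_nonneg _
    · rw [qf_matE, hP, inner_SA, Complex.mul_conj, Complex.ofReal_re]
      have hz : (inner ℂ ξ (Matrix.toEuclideanLin Aᴴ ξ) : ℂ)
          = conj (inner ℂ ξ (Matrix.toEuclideanLin A ξ) : ℂ) := by
        rw [← inner_toEL_conjTranspose, inner_conj_symm, Matrix.conjTranspose_conjTranspose]
      rw [hz, Complex.normSq_conj, ← Complex.sq_norm]
      exact pow_le_pow_left₀ hε2 (hweak A hA) 2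
  -- C is convex
  have hCconv : Convex ℝ C := by
    rintro x ⟨hx1, hx2, hx3, hx4⟩ y ⟨hy1, hy2, hy3, hy4⟩ α β hα hβ hαβ
    have hqf : ∀ v : EuclideanSpace ℂ (Fin n),
        (Stmt19.qf v (α • x + β • y)).re = α * (Stmt19.qf v x).re + β * (Stmt19.qf v y).re := by
      intro v
      rw [qf_add, qf_smul, qf_smul, Complex.add_re, Complex.re_ofReal_mul,
        Complex.re_ofReal_mul]
    refine ⟨?_, ?_, ?_, ?_⟩
    · intro p
      simp only [PiLp.add_apply, PiLp.smul_apply, Complex.real_smul]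
      rw [hx1 p, hy1 p, map_add, map_mul, map_mul, Complex.conj_ofReal, Complex.conj_ofReal]
    · simp only [PiLp.add_apply, PiLp.smul_apply, Complex.real_smul]
      rw [Finset.sum_add_distrib, ← Finset.mul_sum, ← Finset.mul_sum, hx2, hy2,
        mul_one, mul_one, ← Complex.ofReal_add, hαβ, Complex.ofReal_one]
    · intro v
      rw [hqf v]
      have := hx3 v; have := hy3 v
      positivity
    · rw [hqf ξ]
      nlinarith [mul_le_mul_of_nonneg_left hx4 hα, mul_le_mul_of_nonneg_left hy4 hβ]
  -- C is closed
  have hCclosed : IsClosed C := by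
    have h1 : IsClosed {x : EuclideanSpace ℂ (Fin n × Fin n) |
        ∀ p : Fin n × Fin n, x (p.2, p.1) = conj (x p)} := by
      rw [show {x : EuclideanSpace ℂ (Fin n × Fin n) |
          ∀ p : Fin n × Fin n, x (p.2, p.1) = conj (x p)}
        = ⋂ p : Fin n × Fin n, {x | x (p.2, p.1) = conj (x p)} from by
          ext x; simp [Set.mem_iInter]]
      exact isClosed_iInter fun p =>
        isClosed_eq (coord_continuous _) (continuous_star.comp (coord_continuous p))
    have h2 : IsClosed {x : EuclideanSpace ℂ (Fin n × Fin n) | (∑ i, x (i, i)) = 1} :=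
      isClosed_eq (continuous_finset_sum _ fun i _ => coord_continuous (i, i)) continuous_const
    have h3 : IsClosed {x : EuclideanSpace ℂ (Fin n × Fin n) |
        ∀ v : EuclideanSpace ℂ (Fin n), 0 ≤ (Stmt19.qf v x).re} := by
      rw [show {x : EuclideanSpace ℂ (Fin n × Fin n) |
          ∀ v : EuclideanSpace ℂ (Fin n), 0 ≤ (Stmt19.qf v x).re}
        = ⋂ v : EuclideanSpace ℂ (Fin n), {x | 0 ≤ (Stmt19.qf v x).re} from by
          ext x; simp [Set.mem_iInter]]
      exact isClosed_iInter fun v =>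
        isClosed_le continuous_const (Complex.continuous_re.comp (qf_continuous v))
    have h4 : IsClosed {x : EuclideanSpace ℂ (Fin n × Fin n) | a ≤ (Stmt19.qf ξ x).re} :=
      isClosed_le continuous_const (Complex.continuous_re.comp (qf_continuous ξ))
    exact h1.inter (h2.inter (h3.inter h4))
  have hKC : K ⊆ C := closure_minimal (convexHull_min hSC hCconv) hCclosed
  -- compactness and the minimal norm point
  have hSEnorm : ∀ y ∈ SE, ‖y‖ = 1 := by
    rintro - ⟨A, hA, rfl⟩
    have hsq : ‖Stmt19.matE n (A * P * Aᴴ)‖ ^ 2 = 1 := by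
      rw [matE_norm_sq, hSH A]
      have : (A * P * Aᴴ) * (A * P * Aᴴ) = A * P * Aᴴ := by
        calc (A * P * Aᴴ) * (A * P * Aᴴ)
            = A * (P * ((Aᴴ * A) * (P * Aᴴ))) := by simp only [Matrix.mul_assoc]
          _ = A * (P * (P * Aᴴ)) := by rw [hAu A hA, one_mul]
          _ = A * ((P * P) * Aᴴ) := by rw [Matrix.mul_assoc]
          _ = A * (P * Aᴴ) := by rw [hPP]
          _ = A * P * Aᴴ := by rw [Matrix.mul_assoc]
      rw [this]
      have : Matrix.trace (A * P * Aᴴ) = 1 := by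
        rw [Matrix.trace_mul_cycle, hAu A hA, one_mul, hP, proj_trace hξ]
      rw [this]; rfl
    nlinarith [norm_nonneg (Stmt19.matE n (A * P * Aᴴ))]
  have hKball : K ⊆ Metric.closedBall 0 1 := by
    apply closure_minimal (convexHull_min ?_ (convex_closedBall _ _)) Metric.isClosed_closedBall
    intro y hy
    rw [Metric.mem_closedBall, dist_zero_right, hSEnorm y hy]
  have hKcl : IsClosed K := isClosed_closure
  have hKcomp : IsCompact K :=
    (isCompact_closedBall (0 : EuclideanSpace ℂ (Fin n × Fin n)) 1).of_isClosed_subset hKcl hKball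
  have hKne : K.Nonempty := by
    refine ⟨Stmt19.matE n (1 * P * (1 : Matrix (Fin n) (Fin n) ℂ)ᴴ), ?_⟩
    exact subset_closure (subset_convexHull ℝ SE ⟨1, hone, rfl⟩)
  obtain ⟨q, hqK, hqmin⟩ := hKcomp.exists_isMinOn hKne continuous_norm.continuousOn
  have hqmin' : ∀ y ∈ K, ‖q‖ ≤ ‖y‖ := fun y hy => hqmin hy
  have hKconv : Convex ℝ K := (convex_convexHull ℝ SE).closure
  have huniq : ∀ y ∈ K, ‖y‖ = ‖q‖ → y = q := by
    intro y hy hnorm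
    have hm : (1/2 : ℝ) • y + (1/2 : ℝ) • q ∈ K :=
      hKconv hy hqK (by norm_num) (by norm_num) (by norm_num)
    have h1 : ‖q‖ ≤ ‖(1/2 : ℝ) • y + (1/2 : ℝ) • q‖ := hqmin' _ hm
    have h2 : ‖(1/2 : ℝ) • y + (1/2 : ℝ) • q‖ = ‖y + q‖ / 2 := by
      rw [← smul_add, norm_smul, Real.norm_eq_abs, abs_of_nonneg (by norm_num : (0:ℝ) ≤ 1/2)]
      ring
    have hpar := parallelogram_law_with_norm ℂ y q
    rw [hnorm] at hpar
    have h3 : 2 * ‖q‖ ≤ ‖y + q‖ := by linarith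
    have h4 : (2 * ‖q‖) * (2 * ‖q‖) ≤ ‖y + q‖ * ‖y + q‖ :=
      mul_self_le_mul_self (by positivity) h3
    have hyq : ‖y - q‖ * ‖y - q‖ ≤ 0 := by nlinarith
    have h5 : ‖y - q‖ = 0 := by nlinarith [norm_nonneg (y - q), mul_self_nonneg (‖y - q‖)]
    exact sub_eq_zero.mp (norm_eq_zero.mp h5)

  -- invariance of q under conjugation by elements of G
  have hTB : ∀ B ∈ G, Stmt19.matE n (B * (Stmt19.matE n).symm q * Bᴴ) = q := by
    intro B hB
    set TB : EuclideanSpace ℂ (Fin n × Fin n) →ₗ[ℝ] EuclideanSpace ℂ (Fin n × Fin n) :=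
      { toFun := fun x => Stmt19.matE n (B * (Stmt19.matE n).symm x * Bᴴ)
        map_add' := by
          intro x y
          simp only [map_add, mul_add, add_mul]
        map_smul' := by
          intro α x
          simp only [map_smul, RingHom.id_apply, Matrix.mul_smul, Matrix.smul_mul] } with hTBdef
    have hTBapp : ∀ x, TB x = Stmt19.matE n (B * (Stmt19.matE n).symm x * Bᴴ) := fun x => rfl
    have hnp : ∀ M : Matrix (Fin n) (Fin n) ℂ,
        ‖Stmt19.matE n (B * M * Bᴴ)‖ = ‖Stmt19.matE n M‖ := by
      intro M
      have htr : Matrix.trace ((B * M * Bᴴ)ᴴ * (B * M * Bᴴ)) = Matrix.trace (Mᴴ * M) := by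
        calc Matrix.trace ((B * M * Bᴴ)ᴴ * (B * M * Bᴴ))
            = Matrix.trace (B * (Mᴴ * ((Bᴴ * B) * (M * Bᴴ)))) := by
              simp only [Matrix.conjTranspose_mul, Matrix.conjTranspose_conjTranspose,
                Matrix.mul_assoc]
          _ = Matrix.trace (B * (Mᴴ * (M * Bᴴ))) := by rw [hAu B hB, one_mul]
          _ = Matrix.trace ((B * (Mᴴ * M)) * Bᴴ) := by simp only [Matrix.mul_assoc]
          _ = Matrix.trace (Bᴴ * B * (Mᴴ * M)) := by rw [Matrix.trace_mul_cycle]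
          _ = Matrix.trace (Mᴴ * M) := by rw [hAu B hB, one_mul]
      have h1 : ‖Stmt19.matE n (B * M * Bᴴ)‖ ^ 2 = ‖Stmt19.matE n M‖ ^ 2 := by
        rw [matE_norm_sq, matE_norm_sq, htr]
      rw [← Real.sqrt_sq (norm_nonneg (Stmt19.matE n (B * M * Bᴴ))),
        ← Real.sqrt_sq (norm_nonneg (Stmt19.matE n M)), h1]
    have hTBSE : ∀ y ∈ SE, TB y ∈ SE := by
      rintro - ⟨A, hA, rfl⟩
      refine ⟨B * A, hmul B hB A hA, ?_⟩
      show Stmt19.matE n ((B * A) * P * (B * A)ᴴ)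
          = Stmt19.matE n (B * (Stmt19.matE n).symm (Stmt19.matE n (A * P * Aᴴ)) * Bᴴ)
      rw [LinearEquiv.symm_apply_apply]
      congr 1
      simp only [Matrix.conjTranspose_mul, Matrix.mul_assoc]
    have hTBK : ∀ y ∈ K, TB y ∈ K := by
      intro y hy
      have hcont : Continuous TB := TB.continuous_of_finiteDimensional
      have h1 : TB '' K ⊆ closure (TB '' (convexHull ℝ SE)) :=
        image_closure_subset_closure_image hcont
      have h2 : TB '' (convexHull ℝ SE) = convexHull ℝ (TB '' SE) :=
        TB.image_convexHull SE
      have h3 : convexHull ℝ (TB '' SE) ⊆ convexHull ℝ SE :=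
        convexHull_mono (Set.image_subset_iff.mpr fun z hz => hTBSE z hz)
      have : TB y ∈ closure (TB '' (convexHull ℝ SE)) := h1 ⟨y, hy, rfl⟩
      exact closure_mono (h2 ▸ h3) this
    have h4 : ‖TB q‖ = ‖q‖ := by rw [hTBapp]; exact hnp _
    have := huniq (TB q) (hTBK q hqK) h4
    rw [hTBapp] at this
    exact this
  set Q : Matrix (Fin n) (Fin n) ℂ := (Stmt19.matE n).symm q with hQdef
  have hq : Stmt19.matE n Q = q := (Stmt19.matE n).apply_symm_apply q
  obtain ⟨hc1, hc2, hc3, hc4⟩ := hKC hqK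
  have hQH : Q.IsHermitian := by
    ext i j
    rw [Matrix.conjTranspose_apply]
    have := hc1 (i, j)
    show star (Q j i) = Q i j
    have hji : Q j i = q (j, i) := rfl
    have hij : Q i j = q (i, j) := rfl
    rw [hji, hij, this]
    exact Complex.conj_conj _
  have hQtr : Q.trace = 1 := by
    exact hc2
  have hQpos : ∀ w : EuclideanSpace ℂ (Fin n),
      0 ≤ (inner ℂ w (Matrix.toEuclideanLin Q w) : ℂ).re := by
    intro w
    have h := hc3 w
    rwa [← hq, qf_matE] at h
  have hQa : a ≤ (inner ℂ ξ (Matrix.toEuclideanLin Q ξ) : ℂ).re := by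
    have h := hc4
    rwa [← hq, qf_matE] at h
  have hQB : ∀ B ∈ G, Q * B = B * Q := by
    intro B hB
    have h1 : B * Q * Bᴴ = Q := by
      have h := congrArg (Stmt19.matE n).symm (hTB B hB)
      rwa [LinearEquiv.symm_apply_apply] at h
    calc Q * B = (B * Q * Bᴴ) * B := by rw [h1]
      _ = B * Q * (Bᴴ * B) := by simp only [Matrix.mul_assoc]
      _ = B * Q := by rw [hAu B hB, Matrix.mul_one]
  -- spectral theory of Q
  set lam : Fin n → ℝ := hQH.eigenvalues with hlamdef
  set v := hQH.eigenvectorBasis with hvdef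
  have hEig : ∀ j, Matrix.toEuclideanLin Q (v j) = (lam j : ℂ) • (v j) := by
    intro j
    apply PiLp.ext
    intro i
    have h2 := congrFun (hQH.mulVec_eigenvectorBasis j) i
    rw [toEL_apply]
    simpa [Matrix.mulVec, dotProduct, Complex.real_smul] using h2
  have hlam_sum : ∑ j, lam j = 1 := by
    have hs := hQH.spectral_theorem
    have h1 : Q.trace = Matrix.trace (Matrix.diagonal (RCLike.ofReal ∘ lam)) := by
      conv_lhs => rw [hs]
      rw [Unitary.conjStarAlgAut_apply, Matrix.trace_mul_cycle, Unitary.coe_star_mul_self, one_mul]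
    rw [hQtr, Matrix.trace_diagonal] at h1
    have h2 := congrArg Complex.re h1
    rw [Complex.one_re, Complex.re_sum] at h2
    simpa using h2.symm
  have hlam_nonneg : ∀ j, 0 ≤ lam j := by
    intro j
    have h := hQpos (v j)
    rw [hEig j, inner_smul_right, inner_self_eq_norm_sq_to_K,
      v.orthonormal.1 j] at h
    simpa using h
  set c : Fin n → ℂ := fun j => (inner ℂ (v j) ξ : ℂ) with hcdef
  have hsum_c : ∑ j, Complex.normSq (c j) = 1 := by
    have h1 := v.sum_inner_mul_inner ξ ξ
    have h2 : (inner ℂ ξ ξ : ℂ) = 1 := by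
      rw [inner_self_eq_norm_sq_to_K, hξ]; norm_num
    rw [h2] at h1
    have h3 : ∀ j, (inner ℂ ξ (v j) : ℂ) * (inner ℂ (v j) ξ : ℂ)
        = (Complex.normSq (c j) : ℂ) := by
      intro j
      simp only [hcdef]
      rw [Complex.normSq_eq_conj_mul_self, ← inner_conj_symm ξ (v j)]
    rw [Finset.sum_congr rfl fun j _ => h3 j] at h1
    have h4 := congrArg Complex.re h1
    rw [Complex.re_sum, Complex.one_re] at h4
    simpa using h4
  have hQξ_sum : (inner ℂ ξ (Matrix.toEuclideanLin Q ξ) : ℂ).re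
      = ∑ j, lam j * Complex.normSq (c j) := by
    have h1 := v.sum_inner_mul_inner ξ (Matrix.toEuclideanLin Q ξ)
    have h2 : ∀ j, (inner ℂ (v j) (Matrix.toEuclideanLin Q ξ) : ℂ) = (lam j : ℂ) * c j := by
      intro j
      rw [← inner_toEL_conjTranspose Q ξ (v j)]
      rw [show Qᴴ = Q from hQH]
      rw [hEig j, inner_smul_left, Complex.conj_ofReal]
    rw [Finset.sum_congr rfl fun j _ => by rw [h2 j]] at h1
    rw [← h1, Complex.re_sum]
    apply Finset.sum_congr rfl
    intro j _
    rw [show (inner ℂ ξ (v j) : ℂ) * ((lam j : ℂ) * c j)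
        = (lam j : ℂ) * ((Complex.normSq (c j) : ℂ)) from by
      simp only [hcdef]
      rw [Complex.normSq_eq_conj_mul_self, ← inner_conj_symm ξ (v j)]; ring]
    rw [← Complex.ofReal_mul, Complex.ofReal_re]
  obtain ⟨i₀, -, hmax⟩ := Finset.exists_max_image Finset.univ lam
    ⟨⟨0, by omega⟩, Finset.mem_univ _⟩
  have hmax' : ∀ j, lam j ≤ lam i₀ := fun j => hmax j (Finset.mem_univ j)
  have hl0 : a ≤ lam i₀ := by
    have h1 : ∑ j, lam j * Complex.normSq (c j) ≤ lam i₀ := by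
      calc ∑ j, lam j * Complex.normSq (c j)
          ≤ ∑ j, lam i₀ * Complex.normSq (c j) :=
            Finset.sum_le_sum fun j _ =>
              mul_le_mul_of_nonneg_right (hmax' j) (Complex.normSq_nonneg _)
        _ = lam i₀ := by rw [← Finset.mul_sum, hsum_c, mul_one]
    rw [hQξ_sum] at hQa
    linarith
  have hl1 : lam i₀ ≤ 1 := by
    have := Finset.single_le_sum (fun j _ => hlam_nonneg j) (Finset.mem_univ i₀)
    linarith [hlam_sum]
  have hlj : ∀ j, j ≠ i₀ → lam j ≤ 1 - lam i₀ := by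
    intro j hj
    have h1 : ∑ k ∈ Finset.univ.erase i₀, lam k + lam i₀ = 1 := by
      rw [Finset.sum_erase_add _ _ (Finset.mem_univ i₀)]; exact hlam_sum
    have h2 : lam j ≤ ∑ k ∈ Finset.univ.erase i₀, lam k :=
      Finset.single_le_sum (fun k _ => hlam_nonneg k)
        (Finset.mem_erase.mpr ⟨hj, Finset.mem_univ j⟩)
    linarith
  have hkey : a ≤ Complex.normSq (c i₀) := by
    set t := Complex.normSq (c i₀) with htdef
    have hterase : ∑ k ∈ Finset.univ.erase i₀, Complex.normSq (c k) = 1 - t := by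
      have := Finset.sum_erase_add Finset.univ (fun k => Complex.normSq (c k))
        (Finset.mem_univ i₀)
      rw [hsum_c] at this
      linarith [this]
    have ht0 : 0 ≤ t := Complex.normSq_nonneg _
    have hge : a ≤ lam i₀ * t + (1 - lam i₀) * (1 - t) := by
      have h1 : ∑ k ∈ Finset.univ.erase i₀, lam k * Complex.normSq (c k) + lam i₀ * t
          = ∑ j, lam j * Complex.normSq (c j) :=
        Finset.sum_erase_add Finset.univ (fun k => lam k * Complex.normSq (c k))
          (Finset.mem_univ i₀)
      have h2 : ∑ k ∈ Finset.univ.erase i₀, lam k * Complex.normSq (c k)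
          ≤ ∑ k ∈ Finset.univ.erase i₀, (1 - lam i₀) * Complex.normSq (c k) :=
        Finset.sum_le_sum fun k hk =>
          mul_le_mul_of_nonneg_right (hlj k (Finset.ne_of_mem_erase hk))
            (Complex.normSq_nonneg _)
      rw [← Finset.mul_sum, hterase] at h2
      rw [hQξ_sum] at hQa
      linarith
    nlinarith [mul_nonneg (sub_nonneg.mpr hl1) (by linarith : (0:ℝ) ≤ 2 * a - 1)]
  have hvnorm : ‖(v i₀ : EuclideanSpace ℂ (Fin n))‖ = 1 := v.orthonormal.1 i₀
  have hvne : (v i₀ : EuclideanSpace ℂ (Fin n)) ≠ 0 := by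
    intro h0
    rw [h0, norm_zero] at hvnorm
    norm_num at hvnorm
  have hc0 : c i₀ ≠ 0 := by
    intro h0
    have : Complex.normSq (c i₀) = 0 := by rw [h0]; simp
    rw [this] at hkey
    linarith
  refine ⟨c i₀ • v i₀, smul_ne_zero hc0 hvne, ?_, ?_⟩
  · intro B hB
    set u := Matrix.toEuclideanLin B (v i₀) with hudef
    have hQu : Matrix.toEuclideanLin Q u = (lam i₀ : ℂ) • u := by
      rw [hudef, ← toEL_mul, hQB B hB, toEL_mul, hEig i₀, map_smul]
    have horth : ∀ j, j ≠ i₀ → (inner ℂ (v j) u : ℂ) = 0 := by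
      intro j hj
      have h1 : (lam j : ℂ) * (inner ℂ (v j) u : ℂ) = (lam i₀ : ℂ) * (inner ℂ (v j) u : ℂ) := by
        calc (lam j : ℂ) * (inner ℂ (v j) u : ℂ)
            = (inner ℂ ((lam j : ℂ) • (v j : EuclideanSpace ℂ (Fin n))) u : ℂ) := by
              rw [inner_smul_left, Complex.conj_ofReal]
          _ = (inner ℂ (Matrix.toEuclideanLin Q (v j)) u : ℂ) := by rw [hEig j]
          _ = (inner ℂ (Matrix.toEuclideanLin Qᴴ (v j)) u : ℂ) := by
              rw [show Qᴴ = Q from hQH]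
          _ = (inner ℂ (v j) (Matrix.toEuclideanLin Q u) : ℂ) := inner_toEL_conjTranspose Q u (v j)
          _ = (lam i₀ : ℂ) * (inner ℂ (v j) u : ℂ) := by rw [hQu, inner_smul_right]
      have h3 : (lam j : ℂ) ≠ (lam i₀ : ℂ) := by
        intro h
        have heq : lam j = lam i₀ := by exact_mod_cast h
        have := hlj j hj
        linarith [hl0, ha12]
      have h2 : ((lam j : ℂ) - (lam i₀ : ℂ)) * (inner ℂ (v j) u : ℂ) = 0 := by
        rw [sub_mul, h1]; ring
      rcases mul_eq_zero.mp h2 with h | h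
      · exact absurd (sub_eq_zero.mp h) h3
      · exact h
    have hurep : u = (inner ℂ (v i₀) u : ℂ) • (v i₀ : EuclideanSpace ℂ (Fin n)) := by
      conv_lhs => rw [← v.sum_repr' u]
      rw [← Finset.sum_erase_add Finset.univ _ (Finset.mem_univ i₀),
        Finset.sum_eq_zero (fun j hj => by
          rw [horth j (Finset.ne_of_mem_erase hj), zero_smul]), zero_add]
    obtain ⟨mu, hmu⟩ : ∃ mu : ℂ, u = mu • (v i₀ : EuclideanSpace ℂ (Fin n)) := ⟨_, hurep⟩
    refine ⟨mu, ?_⟩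
    rw [map_smul]
    rw [show Matrix.toEuclideanLin B (v i₀) = u from rfl, hmu]
    rw [smul_smul, smul_smul, mul_comm]
  · have hinner_vξ : (inner ℂ (v i₀) ξ : ℂ) = c i₀ := rfl
    have hortho : (inner ℂ (c i₀ • (v i₀ : EuclideanSpace ℂ (Fin n)))
        (ξ - c i₀ • (v i₀ : EuclideanSpace ℂ (Fin n))) : ℂ) = 0 := by
      rw [inner_sub_right, inner_smul_left, inner_smul_left, inner_smul_right,
        hinner_vξ, inner_self_eq_norm_sq_to_K, hvnorm]
      norm_num
    have hpyth : (1 : ℝ) = ‖c i₀ • (v i₀ : EuclideanSpace ℂ (Fin n))‖ ^ 2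
        + ‖ξ - c i₀ • (v i₀ : EuclideanSpace ℂ (Fin n))‖ ^ 2 := by
      have hsumv : c i₀ • (v i₀ : EuclideanSpace ℂ (Fin n))
          + (ξ - c i₀ • (v i₀ : EuclideanSpace ℂ (Fin n))) = ξ := by abel
      have h := norm_add_sq (𝕜 := ℂ) (c i₀ • (v i₀ : EuclideanSpace ℂ (Fin n)))
        (ξ - c i₀ • (v i₀ : EuclideanSpace ℂ (Fin n)))
      rw [hsumv, hξ, hortho] at h
      simpa using h
    have hns : ‖c i₀ • (v i₀ : EuclideanSpace ℂ (Fin n))‖ ^ 2 = Complex.normSq (c i₀) := by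
      rw [norm_smul, hvnorm, mul_one, Complex.sq_norm]
    rw [hns] at hpyth
    have ha' : a = (1 - ε) ^ 2 := ha
    nlinarith [hkey, hε, hn1, hε2]
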